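/- Let N ≥ 0, L ≥ 1 and n be integers with n ≥ N+2, and let x > 0 be a real number with n·x ≠ L. Then g_N^{(n,L)}(x) = ((x − L/n)/(x·(1+x))) · ĝ_N^{(n,L)}(x). -/

import Mathlib

open Finset

noncomputable section

/-- `g_m^{(n,L)}(x)`. -/
def gP (n L m : ℕ) (x : ℝ) : ℝ :=
  ((x - (L : ℝ) / n) / x) *
      ∑ k ∈ Finset.range (m + 1), ((m : ℝ) + 1 - k) * (Nat.choose (L + n) (L + k) : ℝ) * x ^ k
    + ((L : ℝ) * ((m : ℝ) + 1) / ((n : ℝ) * x)) * (Nat.choose (L + n) L : ℝ)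

/-- `q_N^{(n,L)}(y) = ∑_{k=0}^{N} Γ(L+n+1)/(Γ(k+L+1)Γ(n+1−k)) y^k`. -/
def qS (n L : ℝ) (N : ℕ) (y : ℝ) : ℝ :=
  ∑ k ∈ Finset.range (N + 1),
    Real.Gamma (L + n + 1) / (Real.Gamma ((k : ℝ) + L + 1) * Real.Gamma (n + 1 - k)) * y ^ k

/-- `q̂_N^{(n,L)}(y|x)`. -/
def qhat (n L : ℝ) (N : ℕ) (y x : ℝ) : ℝ :=
  qS n L N y + (1 / (n * x - L)) * (Real.Gamma (L + n + 1) / (Real.Gamma (n + 1) * Real.Gamma L))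

/-- `ĝ_N^{(n,L)}(x) = (L+N+1) q̂_{N+1}^{(n,L)}(x|x) − x(n−N−1) q̂_N^{(n,L)}(x|x)`. -/
def ghat (n L : ℝ) (N : ℕ) (x : ℝ) : ℝ :=
  (L + (N : ℝ) + 1) * qhat n L (N + 1) x x - x * (n - N - 1) * qhat n L N x x

lemma gamma_ratio (L n k : ℕ) (hk : k ≤ n) :
    Real.Gamma ((L : ℝ) + n + 1) / (Real.Gamma ((k : ℝ) + L + 1) * Real.Gamma ((n : ℝ) + 1 - k))
      = (Nat.choose (L + n) (L + k) : ℝ) := by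
  have h1 : ((L : ℝ) + n + 1) = ((L + n : ℕ) : ℝ) + 1 := by push_cast; ring
  have h2 : ((k : ℝ) + L + 1) = ((k + L : ℕ) : ℝ) + 1 := by push_cast; ring
  have h3 : ((n : ℝ) + 1 - k) = ((n - k : ℕ) : ℝ) + 1 := by
    have := Nat.cast_sub (R := ℝ) hk
    rw [this]; ring
  rw [h1, h2, h3, Real.Gamma_nat_eq_factorial, Real.Gamma_nat_eq_factorial,
    Real.Gamma_nat_eq_factorial]
  have hfac := Nat.choose_mul_factorial_mul_factorial (Nat.add_le_add_left hk L)
  have hsub : L + n - (L + k) = n - k := by omega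
  rw [hsub] at hfac
  have hk0 : ((k + L).factorial : ℝ) ≠ 0 := by positivity
  have hn0 : ((n - k).factorial : ℝ) ≠ 0 := by positivity
  rw [div_eq_iff (by positivity)]
  rw [← hfac]
  push_cast
  rw [Nat.add_comm k L]
  ring

lemma gamma_L (L n : ℕ) (hL : 1 ≤ L) :
    Real.Gamma ((L : ℝ) + n + 1) / (Real.Gamma ((n : ℝ) + 1) * Real.Gamma (L : ℝ))
      = (L : ℝ) * (Nat.choose (L + n) L : ℝ) := by
  have h1 : ((L : ℝ) + n + 1) = ((L + n : ℕ) : ℝ) + 1 := by push_cast; ring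
  have h2 : ((L : ℝ)) = ((L - 1 : ℕ) : ℝ) + 1 := by
    have := Nat.cast_sub (R := ℝ) hL; rw [this]; push_cast; ring
  rw [h1, h2, Real.Gamma_nat_eq_factorial, Real.Gamma_nat_eq_factorial,
    Real.Gamma_nat_eq_factorial]
  have hfac := Nat.choose_mul_factorial_mul_factorial (Nat.le_add_right L n)
  have hsub : L + n - L = n := by omega
  rw [hsub] at hfac
  have hLfac : L.factorial = L * (L - 1).factorial := by
    conv_lhs => rw [show L = (L-1)+1 by omega]
    rw [Nat.factorial_succ]; congr 1; omega
  rw [div_eq_iff (by positivity), ← hfac, hLfac]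
  push_cast [Nat.cast_sub (R := ℝ) hL]
  ring

lemma key (L n : ℕ) (x : ℝ) : ∀ N : ℕ, N + 1 ≤ n →
    (1 + x) * (∑ k ∈ range (N+1), ((N:ℝ) + 1 - k) * (Nat.choose (L+n) (L+k) : ℝ) * x ^ k)
      + x * ((n:ℝ) - N - 1) * (∑ k ∈ range (N+1), (Nat.choose (L+n) (L+k) : ℝ) * x ^ k)
      + (L : ℝ) * (Nat.choose (L+n) L : ℝ)
    = ((L:ℝ) + N + 1) * (∑ k ∈ range (N+2), (Nat.choose (L+n) (L+k) : ℝ) * x ^ k) := by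
  intro N
  induction N with
  | zero =>
    intro hn
    have hrec := Nat.choose_succ_right_eq (L+n) L
    have hs : L + n - L = n := by omega
    rw [hs] at hrec
    have hrecR : (Nat.choose (L+n) (L+1) : ℝ) * ((L:ℝ)+1) = (Nat.choose (L+n) L : ℝ) * n := by
      exact_mod_cast congrArg (Nat.cast (R := ℝ)) hrec
    simp [Finset.sum_range_succ]
    push_cast
    linear_combination (-x) * hrecR
  | succ N IH =>
    intro hn
    have IH' := IH (by omega)
    simp only [show N+1+1 = N+2 from rfl, show N+1+2 = N+3 from rfl]
    have e1 : ∑ k ∈ range (N+2), (((N:ℝ)+1) + 1 - k) * (Nat.choose (L+n) (L+k) : ℝ) * x ^ k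
        = (∑ k ∈ range (N+1), ((N:ℝ) + 1 - k) * (Nat.choose (L+n) (L+k) : ℝ) * x ^ k)
          + ∑ k ∈ range (N+2), (Nat.choose (L+n) (L+k) : ℝ) * x ^ k := by
      rw [show (∑ k ∈ range (N+2), (((N:ℝ)+1) + 1 - k) * (Nat.choose (L+n) (L+k) : ℝ) * x ^ k)
          = ∑ k ∈ range (N+2), (((N:ℝ) + 1 - k) * (Nat.choose (L+n) (L+k) : ℝ) * x ^ k
              + (Nat.choose (L+n) (L+k) : ℝ) * x ^ k) from sum_congr rfl (fun k _ => by ring),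
        sum_add_distrib, sum_range_succ (fun k => ((N:ℝ) + 1 - k) * (Nat.choose (L+n) (L+k) : ℝ) * x ^ k)]
      push_cast
      ring
    have hrec := Nat.choose_succ_right_eq (L+n) (L+N+1)
    have hsub : L + n - (L+N+1) = n - (N+1) := by omega
    rw [hsub] at hrec
    have hrecR : (Nat.choose (L+n) (L+N+2) : ℝ) * ((L:ℝ)+N+2)
        = (Nat.choose (L+n) (L+N+1) : ℝ) * ((n:ℝ) - (N+1)) := by
      have h := congrArg (Nat.cast (R := ℝ)) hrec
      push_cast [Nat.cast_sub (R := ℝ) (by omega : N + 1 ≤ n)] at h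
      rw [show L+N+1+1 = L+N+2 from rfl] at h
      push_cast at h
      linarith [h]
    have e2 : ∑ k ∈ range (N+3), (Nat.choose (L+n) (L+k) : ℝ) * x ^ k
        = (∑ k ∈ range (N+2), (Nat.choose (L+n) (L+k) : ℝ) * x ^ k)
          + (Nat.choose (L+n) (L+(N+2)) : ℝ) * x ^ (N+2) := sum_range_succ _ _
    have e3 : ∑ k ∈ range (N+2), (Nat.choose (L+n) (L+k) : ℝ) * x ^ k
        = (∑ k ∈ range (N+1), (Nat.choose (L+n) (L+k) : ℝ) * x ^ k)
          + (Nat.choose (L+n) (L+(N+1)) : ℝ) * x ^ (N+1) := sum_range_succ _ _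
    push_cast
    push_cast at e1 e2 e3 IH' hrecR
    rw [e1, e2]
    simp only [show L+(N+1) = L+N+1 from rfl, show L+(N+2) = L+N+2 from rfl] at e3 e2 ⊢
    linear_combination IH' + x * ((n:ℝ) - N - 1) * e3 - x^(N+2) * hrecR

/-- The relation `g_N^{(n,L)}(x) = ((x − L/n)/(x(1+x))) ĝ_N^{(n,L)}(x)`. -/
theorem g_eq_ghat (N L n : ℕ) (hL : 1 ≤ L) (hn : N + 2 ≤ n)
    (x : ℝ) (hx : 0 < x) (hxL : (n : ℝ) * x ≠ L) :
    gP n L N x = ((x - (L : ℝ) / n) / (x * (1 + x))) * ghat n L N x := by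
  have hq : ∀ M : ℕ, M + 1 ≤ n → qS (n:ℝ) (L:ℝ) M x
      = ∑ k ∈ range (M+1), (Nat.choose (L+n) (L+k) : ℝ) * x ^ k := by
    intro M hM
    refine Finset.sum_congr rfl fun k hk => ?_
    rw [gamma_ratio L n k (by simp only [Finset.mem_range] at hk; omega)]
  have hkey := key L n x N (by omega)
  have hgl := gamma_L L n hL
  have hx0 : x ≠ 0 := ne_of_gt hx
  have hn0 : (n:ℝ) ≠ 0 := by
    simp only [ne_eq, Nat.cast_eq_zero]; omega
  have hd : (n:ℝ) * x - (L:ℝ) ≠ 0 := sub_ne_zero.mpr hxL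
  have h1x : (1:ℝ) + x ≠ 0 := by positivity
  rw [gP, ghat, qhat, qhat, hq N (by omega), hq (N+1) (by omega), hgl]
  simp only [show N+1+1 = N+2 from rfl]
  have hG : ((L:ℝ) + (N:ℝ) + 1) *
        ((∑ k ∈ range (N+2), (Nat.choose (L+n) (L+k) : ℝ) * x ^ k)
          + 1 / ((n:ℝ) * x - L) * ((L:ℝ) * (Nat.choose (L+n) L : ℝ)))
      - x * ((n:ℝ) - (N:ℝ) - 1) *
        ((∑ k ∈ range (N+1), (Nat.choose (L+n) (L+k) : ℝ) * x ^ k)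
          + 1 / ((n:ℝ) * x - L) * ((L:ℝ) * (Nat.choose (L+n) L : ℝ)))
      = (1 + x) * (∑ k ∈ range (N+1), ((N:ℝ) + 1 - k) * (Nat.choose (L+n) (L+k) : ℝ) * x ^ k)
        + (L:ℝ) * (Nat.choose (L+n) L : ℝ) * ((N:ℝ) + 1) * (1 + x) / ((n:ℝ) * x - L) := by
    field_simp
    linear_combination (-((n:ℝ) * x - (L:ℝ))) * hkey
  rw [hG]
  have hd2 : x * (n:ℝ) - (L:ℝ) ≠ 0 := by rwa [mul_comm]
  field_simp
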